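/- Let W be a real symmetric m×m matrix with spectral decomposition (λ_i, u_i), u a unit vector, θ > 0, θ ≠ 1, P = I + (θ-1) u uᵀ. If ũ is a unit eigenvector of W P with eigenvalue λ̂ not in the spectrum of W and ⟨ũ, u⟩ ≠ 0, then ⟨ũ, u⟩² = 1 / ((θ-1)² Σ_i (λ_i²/(λ̂-λ_i)²) ⟨u_i, u⟩²). -/

import Mathlib

open Matrix

theorem aux_vmv {m : ℕ} (w v x : Fin m → ℝ) : (vecMulVec w v) *ᵥ x = (v ⬝ᵥ x) • w := by
  ext k
  simp only [vecMulVec, mulVec, dotProduct, Pi.smul_apply, smul_eq_mul, of_apply,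
    Finset.sum_mul]
  exact Finset.sum_congr rfl fun i _ => by ring

theorem aux_sum_mulVec {m : ℕ} (M : Fin m → Matrix (Fin m) (Fin m) ℝ) (x : Fin m → ℝ) :
    (∑ i, M i) *ᵥ x = ∑ i, (M i) *ᵥ x := by
  ext k
  simp only [mulVec, dotProduct, Finset.sum_apply, Matrix.sum_apply, Finset.sum_mul]
  rw [Finset.sum_comm]

theorem aux_dot_sum {m : ℕ} (x : Fin m → ℝ) (f : Fin m → Fin m → ℝ) :
    x ⬝ᵥ (∑ i, f i) = ∑ i, x ⬝ᵥ f i := by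
  simp only [dotProduct, Finset.sum_apply, Finset.mul_sum]
  rw [Finset.sum_comm]

/-- Overlap formula: `⟨ũ,u⟩² = 1/((θ-1)² ∑ᵢ (λᵢ²/(λ̂-λᵢ)²) ⟨uᵢ,u⟩²)`. -/
theorem stmt3 {m : ℕ} (W : Matrix (Fin m) (Fin m) ℝ) (lam : Fin m → ℝ)
    (uvec : Fin m → Fin m → ℝ)
    (horth : ∀ i j, uvec i ⬝ᵥ uvec j = if i = j then (1 : ℝ) else 0)
    (hW : W = ∑ i, lam i • vecMulVec (uvec i) (uvec i))
    (u : Fin m → ℝ) (hu : u ⬝ᵥ u = 1)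
    (θ : ℝ) (hθ : 0 < θ) (hθ1 : θ ≠ 1)
    (util : Fin m → ℝ) (hunit : util ⬝ᵥ util = 1) (lamhat : ℝ)
    (heig : (W * ((1 : Matrix (Fin m) (Fin m) ℝ) + (θ - 1) • vecMulVec u u)) *ᵥ util =
      lamhat • util)
    (hnot : ¬ ∃ v : Fin m → ℝ, v ≠ 0 ∧ W *ᵥ v = lamhat • v)
    (hover : util ⬝ᵥ u ≠ 0) :
    (util ⬝ᵥ u) ^ 2 =
      1 / ((θ - 1) ^ 2 * ∑ i, lam i ^ 2 / (lamhat - lam i) ^ 2 * (uvec i ⬝ᵥ u) ^ 2) := by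
  set c := util ⬝ᵥ u with hc
  set a : Fin m → ℝ := fun j => uvec j ⬝ᵥ util with ha
  set b : Fin m → ℝ := fun j => uvec j ⬝ᵥ u with hb
  have hWv : ∀ v : Fin m → ℝ, W *ᵥ v = ∑ i, (lam i * (uvec i ⬝ᵥ v)) • uvec i := by
    intro v
    rw [hW, aux_sum_mulVec]
    refine Finset.sum_congr rfl fun i _ => ?_
    rw [smul_mulVec, aux_vmv, smul_smul]
  have hdotW : ∀ (j : Fin m) (v : Fin m → ℝ), uvec j ⬝ᵥ (W *ᵥ v) = lam j * (uvec j ⬝ᵥ v) := by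
    intro j v
    rw [hWv, aux_dot_sum]
    simp only [dotProduct_smul, smul_eq_mul, horth]
    simp [mul_ite, mul_comm]
  have huvec_ne : ∀ j, uvec j ≠ 0 := by
    intro j h
    have := horth j j
    simp [h] at this
  have hWuvec : ∀ j, W *ᵥ uvec j = lam j • uvec j := by
    intro j
    rw [hWv]
    rw [Finset.sum_congr rfl (fun i (_ : i ∈ Finset.univ) => by rw [horth i j])]
    simp [Finset.sum_ite_eq]
  have hne : ∀ j, lamhat - lam j ≠ 0 := by
    intro j h
    exact hnot ⟨uvec j, huvec_ne j, by rw [hWuvec j, sub_eq_zero.mp h]⟩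
  have hP : ((1 : Matrix (Fin m) (Fin m) ℝ) + (θ - 1) • vecMulVec u u) *ᵥ util
      = util + ((θ - 1) * c) • u := by
    rw [add_mulVec, one_mulVec, smul_mulVec, aux_vmv, smul_smul,
      dotProduct_comm u util, ← hc]
  have heig' : W *ᵥ (util + ((θ - 1) * c) • u) = lamhat • util := by
    rw [← hP, mulVec_mulVec, heig]
  have key : ∀ j, (lamhat - lam j) * a j = (θ - 1) * c * lam j * b j := by
    intro j
    have h1 := congrArg (fun v => uvec j ⬝ᵥ v) heig'
    simp only [hdotW, dotProduct_smul, smul_eq_mul] at h1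
    rw [dotProduct_add, dotProduct_smul] at h1
    simp only [smul_eq_mul, ← ha, ← hb] at h1
    nlinarith [h1]
  have haj : ∀ j, a j = (θ - 1) * c * lam j * b j / (lamhat - lam j) := by
    intro j
    field_simp [hne j]
    linarith [key j]
  set U : Matrix (Fin m) (Fin m) ℝ := Matrix.of uvec with hU
  have hUUt : U * Uᵀ = 1 := by
    ext i j
    simp only [mul_apply, transpose_apply, hU, of_apply, one_apply]
    exact horth i j
  have hUtU : Uᵀ * U = 1 := mul_eq_one_comm.mp hUUt
  have hpars : ∑ j, a j ^ 2 = 1 := by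
    have h1 : (U *ᵥ util) ⬝ᵥ (U *ᵥ util) = 1 := by
      rw [dotProduct_mulVec (U *ᵥ util) U util, ← vecMul_transpose, vecMul_vecMul,
        hUtU, vecMul_one, hunit]
    rw [← h1]
    simp only [dotProduct, mulVec, hU]
    exact Finset.sum_congr rfl fun j _ => by simp [ha, dotProduct, sq, of_apply, mulVec]
  have hterm : ∀ j, a j ^ 2 =
      (θ - 1) ^ 2 * c ^ 2 * (lam j ^ 2 / (lamhat - lam j) ^ 2 * b j ^ 2) := by
    intro j
    rw [haj j]
    field_simp [hne j]
  set S := ∑ i, lam i ^ 2 / (lamhat - lam i) ^ 2 * b i ^ 2 with hS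
  have hsum : ((θ - 1) ^ 2 * S) * c ^ 2 = 1 := by
    have h2 : ((θ - 1) ^ 2 * S) * c ^ 2 = ∑ j, a j ^ 2 := by
      rw [hS, Finset.mul_sum, Finset.sum_mul]
      exact Finset.sum_congr rfl fun j _ => by rw [hterm j]; ring
    rw [h2, hpars]
  exact eq_one_div_of_mul_eq_one_left (by linear_combination hsum)
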